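/- For every 0 ≤ i ≤ m, the rational number p_i = 4^{m−i} · (n+r+2)/(n+r−2i+2) · ∏_{j=0}^{i−1} (n+r−2j)² · ∏_{ν=i}^{m−1} (n−ν) is a positive integer. -/

import Mathlib

/-- With `r = -s-2` and `m = (n+r)/2`, the rational number
`p_i = 4^{m-i} · (n+r+2)/(n+r-2i+2) · ∏_{j=0}^{i-1} (n+r-2j)² · ∏_{ν=i}^{m-1} (n-ν)`,
where an empty product equals `1`. -/
noncomputable def pcoef (n s m i : ℕ) : ℚ :=
  (4 : ℚ) ^ (m - i) *
    (((n : ℚ) + (-(s : ℚ) - 2) + 2) / ((n : ℚ) + (-(s : ℚ) - 2) - 2 * (i : ℚ) + 2)) *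
    (∏ j ∈ Finset.range i, ((n : ℚ) + (-(s : ℚ) - 2) - 2 * (j : ℚ)) ^ 2) *
    (∏ ν ∈ Finset.Ico i m, ((n : ℚ) - (ν : ℚ)))

lemma key (m : ℕ) : ∀ i, i ≤ m →
    (2*(m:ℚ) - 2*i + 2) * (4^i * ∏ j ∈ Finset.range i,
      (((m:ℚ)+1-j) * ((m:ℚ)-j))) =
    (2*(m:ℚ)+2) * ∏ j ∈ Finset.range i, (2*(m:ℚ)-2*j)^2 := by
  intro i
  induction i with
  | zero => intro _; simp
  | succ i ih =>
    intro hi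
    have ih' := ih (Nat.le_of_succ_le hi)
    rw [Finset.prod_range_succ, Finset.prod_range_succ]
    push_cast
    linear_combination (2*(m:ℚ)-2*i)^2 * ih'

/-- Fix `n ≥ 2`, `0 ≤ s ≤ n-2` with `n - s` even, `r = -s-2` and `m = (n+r)/2`
(encoded by `n = s + 2 + 2m`).  Then for every `0 ≤ i ≤ m`, the rational number
`p_i` is a positive integer. -/
theorem stmt10 (n s m : ℕ) (hn : 2 ≤ n) (hm : n = s + 2 + 2 * m) :
    ∀ i ≤ m, ∃ N : ℕ, 0 < N ∧ pcoef n s m i = (N : ℚ) := by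
  intro i hi
  refine ⟨4 ^ m * (∏ j ∈ Finset.range i, (m + 1 - j)) *
    (∏ j ∈ Finset.range i, (m - j)) * (∏ ν ∈ Finset.Ico i m, (n - ν)), ?_, ?_⟩
  · apply Nat.mul_pos
    apply Nat.mul_pos
    apply Nat.mul_pos
    · positivity
    · exact Finset.prod_pos fun j hj => by
        have := Finset.mem_range.mp hj; omega
    · exact Finset.prod_pos fun j hj => by
        have := Finset.mem_range.mp hj; omega
    · exact Finset.prod_pos fun ν hν => by
        have := (Finset.mem_Ico.mp hν).2; omega
  · have hnq : (n : ℚ) = (s:ℚ) + 2 + 2*m := by rw [hm]; push_cast; ring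
    have hD : (2*(m:ℚ) - 2*i + 2) ≠ 0 := by
      have : (i:ℚ) ≤ (m:ℚ) := by exact_mod_cast hi
      nlinarith
    have hk := key m i hi
    have hdiv : (2*(m:ℚ)+2) / (2*(m:ℚ) - 2*i + 2) *
        (∏ j ∈ Finset.range i, (2*(m:ℚ)-2*j)^2) =
        4^i * ∏ j ∈ Finset.range i, (((m:ℚ)+1-j) * ((m:ℚ)-j)) := by
      rw [div_mul_eq_mul_div, div_eq_iff hD]
      linear_combination -hk
    unfold pcoef
    rw [hnq]
    have e1 : ∏ j ∈ Finset.range i,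
        (((s:ℚ) + 2 + 2*m) + (-(s:ℚ) - 2) - 2*(j:ℚ))^2 =
        ∏ j ∈ Finset.range i, (2*(m:ℚ)-2*j)^2 := by
      apply Finset.prod_congr rfl; intro j _; ring_nf
    have e2 : (((s:ℚ) + 2 + 2*m) + (-(s:ℚ) - 2) + 2) /
        (((s:ℚ) + 2 + 2*m) + (-(s:ℚ) - 2) - 2*(i:ℚ) + 2) =
        (2*(m:ℚ)+2) / (2*(m:ℚ) - 2*i + 2) := by ring_nf
    rw [e1, e2]
    have ecast : ((4 ^ m * (∏ j ∈ Finset.range i, (m + 1 - j)) *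
        (∏ j ∈ Finset.range i, (m - j)) * (∏ ν ∈ Finset.Ico i m, (n - ν)) : ℕ) : ℚ) =
        (4:ℚ)^m * (∏ j ∈ Finset.range i, ((m:ℚ) + 1 - j)) *
        (∏ j ∈ Finset.range i, ((m:ℚ) - j)) * (∏ ν ∈ Finset.Ico i m, ((n:ℚ) - ν)) := by
      have c1 : (∏ j ∈ Finset.range i, ((m + 1 - j : ℕ) : ℚ)) =
          ∏ j ∈ Finset.range i, ((m:ℚ) + 1 - j) :=
        Finset.prod_congr rfl fun j hj => by
          have := Finset.mem_range.mp hj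
          rw [Nat.cast_sub (by omega)]; push_cast; ring
      have c2 : (∏ j ∈ Finset.range i, ((m - j : ℕ) : ℚ)) =
          ∏ j ∈ Finset.range i, ((m:ℚ) - j) :=
        Finset.prod_congr rfl fun j hj => by
          have := Finset.mem_range.mp hj
          rw [Nat.cast_sub (by omega)]
      have c3 : (∏ ν ∈ Finset.Ico i m, ((n - ν : ℕ) : ℚ)) =
          ∏ ν ∈ Finset.Ico i m, ((n:ℚ) - ν) :=
        Finset.prod_congr rfl fun ν hν => by
          have := (Finset.mem_Ico.mp hν).2
          rw [Nat.cast_sub (by omega)]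
      push_cast [← c1, ← c2, ← c3]
      ring
    rw [ecast, hnq]
    have hpow : (4:ℚ)^(m-i) * 4^i = 4^m := by
      rw [← pow_add, Nat.sub_add_cancel hi]
    calc (4:ℚ)^(m-i) * ((2*(m:ℚ)+2) / (2*(m:ℚ) - 2*i + 2)) *
          (∏ j ∈ Finset.range i, (2*(m:ℚ)-2*j)^2) *
          (∏ ν ∈ Finset.Ico i m, (((s:ℚ)+2+2*m) - ν))
        = (4:ℚ)^(m-i) * (4^i * ∏ j ∈ Finset.range i, (((m:ℚ)+1-j) * ((m:ℚ)-j))) *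
          (∏ ν ∈ Finset.Ico i m, (((s:ℚ)+2+2*m) - ν)) := by
          rw [mul_assoc ((4:ℚ)^(m-i)), hdiv]
      _ = (4:ℚ)^m * (∏ j ∈ Finset.range i, ((m:ℚ) + 1 - j)) *
          (∏ j ∈ Finset.range i, ((m:ℚ) - j)) *
          (∏ ν ∈ Finset.Ico i m, (((s:ℚ)+2+2*m) - ν)) := by
          rw [Finset.prod_mul_distrib, ← hpow]
          ring
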